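/- For every x ∈ [0,1]ⁿ, the vector Φ(x) belongs to C_n; that is: (a) for every triple 1 ≤ i < j < k ≤ n the 6-vector Φ(x)_{ijk} = (u_{ij}, u_{ik}, u_{jk}, v_{ij}, v_{ik}, v_{jk}) lies in convexHull ℝ (φ '' {0,1}³), and (b) for every index i the value g_{i,j,k}(Φ(x)) is the same for all pairs j < k with j ≠ i ≠ k. -/

import Mathlib

/-- The map `φ : ℝ³ → ℝ⁶` of primary variables. -/
noncomputable def phi (x : Fin 3 → ℝ) : Fin 6 → ℝ :=
  ![(x 0 + 2 * x 0 * x 1 + x 1) / 2,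
    (x 0 + 2 * x 0 * x 2 + x 2) / 2,
    (x 1 + 2 * x 1 * x 2 + x 2) / 2,
    (x 0 - 2 * x 0 * x 1 + x 1) / 2,
    (x 0 - 2 * x 0 * x 2 + x 2) / 2,
    (x 1 - 2 * x 1 * x 2 + x 2) / 2]

/-- The primary variables `u_{ij} = (x_i + 2 x_i x_j + x_j)/2`. -/
noncomputable def U {m : ℕ} (x : Fin m → ℝ) (i j : Fin m) : ℝ :=
  (x i + 2 * x i * x j + x j) / 2

/-- The primary variables `v_{ij} = (x_i − 2 x_i x_j + x_j)/2`. -/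
noncomputable def V {m : ℕ} (x : Fin m → ℝ) (i j : Fin m) : ℝ :=
  (x i - 2 * x i * x j + x j) / 2

/-- `g_{i,j,k}(w) = (u_{ij}+v_{ij}+u_{ik}+v_{ik}−u_{jk}−v_{jk})/2`. -/
noncomputable def gFun {m : ℕ} (u v : Fin m → Fin m → ℝ) (i j k : Fin m) : ℝ :=
  (u i j + v i j + u i k + v i k - u j k - v j k) / 2

/-- The triple component `w_{ijk} = (u_{ij}, u_{ik}, u_{jk}, v_{ij}, v_{ik}, v_{jk})`. -/
noncomputable def wTriple {m : ℕ} (u v : Fin m → Fin m → ℝ) (i j k : Fin m) :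
    Fin 6 → ℝ :=
  ![u i j, u i k, u j k, v i j, v i k, v j k]

lemma interp1 (a b c : ℝ) :
    phi ![a, b, c] = (1 - a) • phi ![0, b, c] + a • phi ![1, b, c] := by
  funext r
  fin_cases r <;>
    · simp only [Pi.add_apply, Pi.smul_apply, smul_eq_mul]
      norm_num [phi, Matrix.cons_val_succ', Matrix.cons_val_two, Matrix.tail_cons, Matrix.head_cons]
      ring

lemma interp2 (p b c : ℝ) :
    phi ![p, b, c] = (1 - b) • phi ![p, 0, c] + b • phi ![p, 1, c] := by
  funext r
  fin_cases r <;>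
    · simp only [Pi.add_apply, Pi.smul_apply, smul_eq_mul]
      norm_num [phi, Matrix.cons_val_succ', Matrix.cons_val_two, Matrix.tail_cons, Matrix.head_cons]
      ring

lemma interp3 (p q c : ℝ) :
    phi ![p, q, c] = (1 - c) • phi ![p, q, 0] + c • phi ![p, q, 1] := by
  funext r
  fin_cases r <;>
    · simp only [Pi.add_apply, Pi.smul_apply, smul_eq_mul]
      norm_num [phi, Matrix.cons_val_succ', Matrix.cons_val_two, Matrix.tail_cons, Matrix.head_cons]
      ring

lemma phi_mem_hull (a b c : ℝ) (ha0 : 0 ≤ a) (ha1 : a ≤ 1) (hb0 : 0 ≤ b)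
    (hb1 : b ≤ 1) (hc0 : 0 ≤ c) (hc1 : c ≤ 1) :
    phi ![a, b, c] ∈
      convexHull ℝ (phi '' {p : Fin 3 → ℝ | ∀ i, p i = 0 ∨ p i = 1}) := by
  set S : Set (Fin 6 → ℝ) := phi '' {p : Fin 3 → ℝ | ∀ i, p i = 0 ∨ p i = 1} with hS
  have hconv := convex_convexHull ℝ S
  have hv : ∀ p q r : ℝ, (p = 0 ∨ p = 1) → (q = 0 ∨ q = 1) → (r = 0 ∨ r = 1) →
      phi ![p, q, r] ∈ convexHull ℝ S := by
    intro p q r hp hq hr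
    apply subset_convexHull
    exact ⟨![p, q, r], fun i => by fin_cases i <;> simpa, rfl⟩
  have h3 : ∀ p q : ℝ, (p = 0 ∨ p = 1) → (q = 0 ∨ q = 1) →
      phi ![p, q, c] ∈ convexHull ℝ S := by
    intro p q hp hq
    rw [interp3]
    exact hconv (hv p q 0 hp hq (Or.inl rfl)) (hv p q 1 hp hq (Or.inr rfl))
      (by linarith) hc0 (by ring)
  have h2 : ∀ p : ℝ, (p = 0 ∨ p = 1) → phi ![p, b, c] ∈ convexHull ℝ S := by
    intro p hp
    rw [interp2]
    exact hconv (h3 p 0 hp (Or.inl rfl)) (h3 p 1 hp (Or.inr rfl))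
      (by linarith) hb0 (by ring)
  rw [interp1]
  exact hconv (h2 0 (Or.inl rfl)) (h2 1 (Or.inr rfl)) (by linarith) ha0 (by ring)

theorem Phi_mem_Cn (n : ℕ) (x : Fin (n + 3) → ℝ)
    (hx : ∀ i, x i ∈ Set.Icc (0 : ℝ) 1) :
    (∀ i j k : Fin (n + 3), i < j → j < k →
      wTriple (U x) (V x) i j k ∈
        convexHull ℝ (phi '' {p : Fin 3 → ℝ | ∀ i, p i = 0 ∨ p i = 1})) ∧
    (∀ i j k j' k' : Fin (n + 3), j < k → j ≠ i → k ≠ i →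
      j' < k' → j' ≠ i → k' ≠ i →
      gFun (U x) (V x) i j k = gFun (U x) (V x) i j' k') := by
  constructor
  · intro i j k _ _
    have ha := hx i; have hb := hx j; have hc := hx k
    have key := phi_mem_hull (x i) (x j) (x k) ha.1 ha.2 hb.1 hb.2 hc.1 hc.2
    have hw : wTriple (U x) (V x) i j k = phi ![x i, x j, x k] := by
      funext m
      fin_cases m <;>
        norm_num [wTriple, phi, U, V, Matrix.cons_val_succ', Matrix.cons_val_two, Matrix.tail_cons, Matrix.head_cons]
    rw [hw]; exact key
  · intro i j k j' k' _ _ _ _ _ _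
    simp only [gFun, U, V]; ring
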